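/- If θ(t) = (θ₁(t), θ₂(t)) solves the gradient flow ODE θ₁' = -2·Σ·(θ₁/(1-θ₂)² - ξ/(1-θ₂)) and θ₂' = -2·(θ₁ᵀ/(1-θ₂)²)·Σ·(θ₁/(1-θ₂) - ξ) on an interval where θ₂(t) ≠ 1, then the quantity ‖θ₁(t)‖₂² + (θ₂(t) - 1)² is constant along the trajectory. -/

import Mathlib

open Matrix

/-- Along any solution of the linear DEQ gradient-flow ODE
`θ₁' = -2 Σ (θ₁/(1-θ₂)² - ξ/(1-θ₂))`,
`θ₂' = -2 (θ₁ᵀ/(1-θ₂)²) Σ (θ₁/(1-θ₂) - ξ)`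
on an interval `I ∋ 0` where `θ₂(t) ≠ 1`, the quantity
`‖θ₁(t)‖₂² + (θ₂(t) - 1)²` is constant. -/
theorem gradient_flow_conservation {d : ℕ}
    (Sig : Matrix (Fin d) (Fin d) ℝ) (hSym : Sig.IsSymm) (hPSD : Sig.PosSemidef)
    (ξ : Fin d → ℝ)
    (I : Set ℝ) (hI : Convex ℝ I) (h0 : (0 : ℝ) ∈ I)
    (θ₁ : ℝ → Fin d → ℝ) (θ₂ : ℝ → ℝ)
    (hne : ∀ t ∈ I, θ₂ t ≠ 1)
    (hθ₁ : ∀ t ∈ I, HasDerivWithinAt θ₁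
      ((-2 : ℝ) • Sig.mulVec ((1 / (1 - θ₂ t) ^ 2) • θ₁ t - (1 / (1 - θ₂ t)) • ξ)) I t)
    (hθ₂ : ∀ t ∈ I, HasDerivWithinAt θ₂
      (-2 * (((1 / (1 - θ₂ t) ^ 2) • θ₁ t) ⬝ᵥ Sig.mulVec ((1 / (1 - θ₂ t)) • θ₁ t - ξ))) I t) :
    ∀ t ∈ I, θ₁ t ⬝ᵥ θ₁ t + (θ₂ t - 1) ^ 2 = θ₁ 0 ⬝ᵥ θ₁ 0 + (θ₂ 0 - 1) ^ 2 := by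
  set F : ℝ → ℝ := fun s => θ₁ s ⬝ᵥ θ₁ s + (θ₂ s - 1) ^ 2 with hF
  have key : ∀ t ∈ I, HasDerivWithinAt F 0 I t := by
    intro t ht
    have hc : (1 - θ₂ t) ≠ 0 := sub_ne_zero.mpr fun h => hne t ht h.symm
    set v : Fin d → ℝ :=
      (-2 : ℝ) • Sig.mulVec ((1 / (1 - θ₂ t) ^ 2) • θ₁ t - (1 / (1 - θ₂ t)) • ξ) with hv
    set w : ℝ :=
      -2 * (((1 / (1 - θ₂ t) ^ 2) • θ₁ t) ⬝ᵥ Sig.mulVec ((1 / (1 - θ₂ t)) • θ₁ t - ξ)) with hw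
    have h1 : ∀ i, HasDerivWithinAt (fun s => θ₁ s i) (v i) I t :=
      hasDerivWithinAt_pi.1 (hθ₁ t ht)
    have hdot : HasDerivWithinAt (fun s => θ₁ s ⬝ᵥ θ₁ s)
        (∑ i, (v i * θ₁ t i + θ₁ t i * v i)) I t := by
      simp only [dotProduct]
      exact HasDerivWithinAt.fun_sum fun i _ => (h1 i).mul (h1 i)
    have hsq : HasDerivWithinAt (fun s => (θ₂ s - 1) ^ 2)
        ((2 : ℕ) * (θ₂ t - 1) ^ (2 - 1) * w) I t :=
      ((hθ₂ t ht).sub_const 1).pow 2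
    have hsum := hdot.add hsq
    have hzero : (∑ i, (v i * θ₁ t i + θ₁ t i * v i)) + (2 : ℕ) * (θ₂ t - 1) ^ (2 - 1) * w = 0 := by
      have hsv : ∑ i, (v i * θ₁ t i + θ₁ t i * v i) = v ⬝ᵥ θ₁ t + θ₁ t ⬝ᵥ v := by
        simp [dotProduct, Finset.sum_add_distrib]
      rw [hsv, dotProduct_comm v (θ₁ t), hv, hw]
      simp only [Matrix.mulVec_sub, Matrix.mulVec_smul, dotProduct_smul, smul_dotProduct,
        dotProduct_sub, smul_eq_mul, Pi.smul_apply, dotProduct_smul]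
      have hc2 : (1 - θ₂ t) ^ 2 ≠ 0 := pow_ne_zero 2 hc
      field_simp
      ring
    rw [← hzero]
    exact hsum
  intro t ht
  have := hI.norm_image_sub_le_of_norm_hasDerivWithin_le (C := 0) (f' := fun _ => (0 : ℝ))
    key (fun x _ => by simp) h0 ht
  have h2 : F t = F 0 := by
    have : ‖F t - F 0‖ ≤ 0 := by simpa using this
    have := norm_nonneg (F t - F 0)
    have : ‖F t - F 0‖ = 0 := le_antisymm (by linarith) (by positivity)
    exact sub_eq_zero.1 (norm_eq_zero.1 this)
  exact h2
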